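/- Points p₁, p₂, p₃, p₄, p₅ of Euclidean three-space ℝ³ are coplanar or lie on a common sphere if and only if Δ(p₁,p₂,p₃,p₄,p₅) = 0, where Δ(p₁,…,p₅) is the determinant of the 5×5 matrix whose (i,j) entry is dist(p_i,p_j)² (with zeros on the diagonal). -/

import Mathlib

open Matrix RealInnerProductSpace

local notation "E" => EuclideanSpace ℝ (Fin 3)

lemma coplanar_iff_normal (p : Fin 5 → EuclideanSpace ℝ (Fin 3)) :
    Coplanar ℝ (Set.range p) ↔
      ∃ b : EuclideanSpace ℝ (Fin 3), b ≠ 0 ∧ ∀ i, inner ℝ b (p i - p 0) = 0 := by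
  constructor
  · intro h
    have hne : vectorSpan ℝ (Set.range p) ≠ ⊤ := by
      intro htop
      have := h.finrank_le_two
      rw [htop] at this
      simp [finrank_top, finrank_euclideanSpace_fin] at this
    have hbot : (vectorSpan ℝ (Set.range p))ᗮ ≠ ⊥ := by
      rw [Ne, Submodule.orthogonal_eq_bot_iff]
      exact hne
    obtain ⟨b, hb, hb0⟩ := Submodule.exists_mem_ne_zero_of_ne_bot hbot
    refine ⟨b, hb0, fun i => ?_⟩
    have : p i - p 0 ∈ vectorSpan ℝ (Set.range p) := by
      exact vsub_mem_vectorSpan ℝ (Set.mem_range_self i) (Set.mem_range_self 0)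
    exact real_inner_comm (p i - p 0) b ▸ (Submodule.mem_orthogonal _ b).1 hb _ this
  · rintro ⟨b, hb0, hb⟩
    have hK : vectorSpan ℝ (Set.range p) ≤ LinearMap.ker (innerSL ℝ b).toLinearMap := by
      rw [vectorSpan, Submodule.span_le]
      rintro x ⟨u, ⟨i, rfl⟩, v, ⟨j, rfl⟩, rfl⟩
      simp only [SetLike.mem_coe, LinearMap.mem_ker, ContinuousLinearMap.coe_coe, vsub_eq_sub]
      have : p i - p j = (p i - p 0) - (p j - p 0) := by abel
      rw [this]
      have hi := hb i; have hj := hb j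
      rw [inner_sub_right] at hi hj
      simp only [innerSL_apply_apply, inner_sub_right]
      linarith
    have hker : Module.finrank ℝ (LinearMap.ker (innerSL ℝ b).toLinearMap) ≤ 2 := by
      have h1 : Module.finrank ℝ (LinearMap.range (innerSL ℝ b).toLinearMap) +
          Module.finrank ℝ (LinearMap.ker (innerSL ℝ b).toLinearMap) =
          Module.finrank ℝ (EuclideanSpace ℝ (Fin 3)) :=
        LinearMap.finrank_range_add_finrank_ker _
      have h2 : LinearMap.range (innerSL ℝ b).toLinearMap ≠ ⊥ := by
        rw [Ne, LinearMap.range_eq_bot]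
        intro hzero
        apply hb0
        have := congrFun (congrArg DFunLike.coe hzero) b
        rw [← inner_self_eq_zero (𝕜 := ℝ) (x := b)]
        simpa using this
      have h3 : 0 < Module.finrank ℝ (LinearMap.range (innerSL ℝ b).toLinearMap) := by
        rw [Nat.pos_iff_ne_zero, Ne, Submodule.finrank_eq_zero]; exact h2
      rw [finrank_euclideanSpace_fin] at h1
      omega
    rw [coplanar_iff_finrank_le_two]
    exact le_trans (Submodule.finrank_mono hK) hker

noncomputable def liftA (p : Fin 5 → EuclideanSpace ℝ (Fin 3)) : Matrix (Fin 5) (Fin 5) ℝ :=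
  Matrix.of fun i j => ![1, p i 0, p i 1, p i 2, ∑ k, p i k ^ 2] j

def Qmat : Matrix (Fin 5) (Fin 5) ℝ :=
  !![0,0,0,0,1; 0,-2,0,0,0; 0,0,-2,0,0; 0,0,0,-2,0; 1,0,0,0,0]

lemma dist_sq_eq (x y : EuclideanSpace ℝ (Fin 3)) :
    dist x y ^ 2 = ∑ k, (x k - y k) ^ 2 := by
  rw [EuclideanSpace.dist_eq, Real.sq_sqrt]
  · simp [Real.dist_eq, sq_abs]
  · positivity

lemma distFactor (p : Fin 5 → EuclideanSpace ℝ (Fin 3)) :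
    (Matrix.of fun i j : Fin 5 => dist (p i) (p j) ^ 2) = liftA p * Qmat * (liftA p)ᵀ := by
  ext i j
  simp only [Matrix.mul_apply, Matrix.of_apply, Matrix.transpose_apply, liftA, Qmat,
    Fin.sum_univ_five]
  rw [dist_sq_eq, Fin.sum_univ_three]
  simp [Matrix.vecHead, Matrix.vecTail, Fin.sum_univ_three]
  ring

lemma detQ : Qmat.det = 8 := by
  simp [Qmat, Matrix.det_succ_row_zero, Fin.sum_univ_succ, Fin.succAbove]
  norm_num

/-- Five points of `ℝ³` are coplanar or lie on a common sphere if and only if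
the determinant `Δ(p₁,…,p₅)` of the `5×5` matrix of their squared mutual
distances vanishes. -/
theorem coplanar_or_cospherical_iff_delta_det_eq_zero
    (p : Fin 5 → EuclideanSpace ℝ (Fin 3)) :
    (Coplanar ℝ (Set.range p) ∨
      ∃ (c : EuclideanSpace ℝ (Fin 3)) (r : ℝ), 0 < r ∧ ∀ i, dist c (p i) = r) ↔
    Matrix.det (Matrix.of fun i j : Fin 5 => dist (p i) (p j) ^ 2) = 0 := by
  rw [distFactor, Matrix.det_mul, Matrix.det_mul, detQ, Matrix.det_transpose]
  have h8 : (liftA p).det * 8 * (liftA p).det = 0 ↔ (liftA p).det = 0 := by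
    constructor
    · intro h
      rcases mul_eq_zero.1 h with h | h
      · rcases mul_eq_zero.1 h with h | h
        · exact h
        · norm_num at h
      · exact h
    · intro h; rw [h]; ring
  rw [h8, ← Matrix.exists_mulVec_eq_zero_iff]
  have hmv : ∀ v : Fin 5 → ℝ, (liftA p *ᵥ v = 0 ↔
      ∀ i, v 0 + p i 0 * v 1 + p i 1 * v 2 + p i 2 * v 3 + (∑ k, p i k ^ 2) * v 4 = 0) := by
    intro v
    constructor
    · intro h i
      have := congrFun h i
      simpa [liftA, Matrix.mulVec, dotProduct, Fin.sum_univ_five, Matrix.vecHead, Matrix.vecTail] using this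
    · intro h
      funext i
      simpa [liftA, Matrix.mulVec, dotProduct, Fin.sum_univ_five, Matrix.vecHead, Matrix.vecTail] using h i
  constructor
  · rintro (hcop | ⟨c, r, hr, hcr⟩)
    · obtain ⟨b, hb0, hb⟩ := (coplanar_iff_normal p).1 hcop
      refine ⟨![-inner ℝ b (p 0), b 0, b 1, b 2, 0], ?_, ?_⟩
      · intro h
        apply hb0
        ext k
        fin_cases k
        · simpa using congrFun h 1
        · simpa using congrFun h 2
        · simpa using congrFun h 3
      · rw [hmv]
        intro i
        have hi := hb i
        rw [inner_sub_right] at hi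
        simp only [PiLp.inner_apply, RCLike.inner_apply, conj_trivial,
          Fin.sum_univ_three] at hi ⊢
        simp only [Matrix.cons_val_zero, Matrix.cons_val_one, Matrix.cons_val_two, Matrix.cons_val_three, Matrix.cons_val_four, Matrix.cons_val_succ, Function.comp, Matrix.vecHead, Matrix.vecTail]
        linarith
    · refine ⟨![∑ k, c k ^ 2 - r ^ 2, -2 * c 0, -2 * c 1, -2 * c 2, 1], ?_, ?_⟩
      · intro h
        have := congrFun h 4
        exact one_ne_zero this
      · rw [hmv]
        intro i
        have hi : dist c (p i) ^ 2 = r ^ 2 := by rw [hcr i]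
        rw [dist_sq_eq, Fin.sum_univ_three] at hi
        simp only [Fin.sum_univ_three]
        simp only [Matrix.cons_val_zero, Matrix.cons_val_one, Matrix.cons_val_two, Matrix.cons_val_three, Matrix.cons_val_four, Matrix.cons_val_succ, Function.comp, Matrix.vecHead, Matrix.vecTail]
        linarith
  · rintro ⟨v, hv0, hv⟩
    rw [hmv] at hv
    by_cases h4 : v 4 = 0
    · left
      rw [coplanar_iff_normal]
      refine ⟨(WithLp.equiv 2 (Fin 3 → ℝ)).symm ![v 1, v 2, v 3], ?_, ?_⟩
      · intro hb
        apply hv0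
        have h1 : v 1 = 0 := by simpa using congrArg (fun x => x 0) hb
        have h2 : v 2 = 0 := by simpa using congrArg (fun x => x 1) hb
        have h3 : v 3 = 0 := by simpa using congrArg (fun x => x 2) hb
        have h0 : v 0 = 0 := by have := hv 0; rw [h1, h2, h3, h4] at this; linarith
        funext j
        fin_cases j <;> assumption
      · intro i
        rw [inner_sub_right]
        have hi := hv i
        have h0 := hv 0
        rw [h4] at hi h0
        simp only [PiLp.inner_apply, RCLike.inner_apply, conj_trivial, Fin.sum_univ_three]
        simp only [WithLp.equiv_symm_apply, PiLp.toLp_apply, Matrix.cons_val_zero, Matrix.cons_val_one, Matrix.cons_val_two, Matrix.cons_val_three, Matrix.cons_val_four, Matrix.cons_val_succ, Function.comp,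
          Matrix.vecHead, Matrix.vecTail]
        linarith
    · set c : EuclideanSpace ℝ (Fin 3) :=
        (WithLp.equiv 2 (Fin 3 → ℝ)).symm ![-v 1/(2*v 4), -v 2/(2*v 4), -v 3/(2*v 4)] with hc
      set R : ℝ := (∑ k, c k ^ 2) - v 0 / v 4 with hR
      have key : ∀ i, dist c (p i) ^ 2 = R := by
        intro i
        rw [dist_sq_eq, Fin.sum_univ_three, hR, Fin.sum_univ_three]
        have hi := hv i
        simp only [hc, WithLp.equiv_symm_apply, PiLp.toLp_apply, Matrix.cons_val_zero, Matrix.cons_val_one, Matrix.cons_val_two, Matrix.cons_val_three, Matrix.cons_val_four, Matrix.cons_val_succ, Function.comp,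
          Matrix.vecHead, Matrix.vecTail, Fin.sum_univ_three] at hi ⊢
        field_simp
        linear_combination (4 * v 4) * hi
      have hR0 : 0 ≤ R := by rw [← key 0]; positivity
      rcases eq_or_lt_of_le hR0 with hReq | hRpos
      · left
        have hall : ∀ i, p i = c := by
          intro i
          have : dist c (p i) = 0 := by
            have := key i
            rw [← hReq] at this
            exact pow_eq_zero_iff (n := 2) (by norm_num) |>.1 this
          rw [dist_eq_zero] at this
          exact this.symm
        have : Set.range p ⊆ {c} := by rintro x ⟨i, rfl⟩; simp [hall i]
        exact ((collinear_singleton ℝ c).subset this).coplanar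
      · right
        refine ⟨c, Real.sqrt R, Real.sqrt_pos.2 hRpos, fun i => ?_⟩
        rw [← Real.sqrt_sq dist_nonneg, key i]
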